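/- Let n ≥ 1, k ∈ {1,…,n}, and q₁,…,qₙ ∈ ℕ with N = q₁ + ⋯ + qₙ. Then the coefficient of the monomial ∏_{j=1}^n x_j^{k·q_j + j − 1} in the polynomial (x₁^k + ⋯ + xₙ^k)^N · ∏_{1 ≤ i < j ≤ n} (x_j − x_i) (with integer coefficients) equals N! · ∏_{s=1}^k [ ∏_{0 ≤ i < j ≤ ⌊(n−s)/k⌋} ((q_{jk+s} + j) − (q_{ik+s} + i)) / ∏_{j=0}^{⌊(n−s)/k⌋} (q_{jk+s} + j)! ]. -/

import Mathlib

open MvPolynomial Finset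


lemma aux_Iio_prod {β : Type*} [CommMonoid β] {m : ℕ} (j : Fin m) (g : ℕ → β) :
    ∏ i ∈ Finset.Iio j, g i.1 = ∏ i ∈ Finset.range j.1, g i := by
  have h1 : ((Finset.Iio j).image Fin.val) = Finset.range j.1 := by
    ext a
    simp only [Finset.mem_image, Finset.mem_Iio, Finset.mem_range]
    constructor
    · rintro ⟨b, hb, rfl⟩; exact hb
    · intro ha; exact ⟨⟨a, lt_trans ha j.2⟩, by simpa [Fin.lt_iff_val_lt_val] using ha, rfl⟩
  rw [← h1, Finset.prod_image (fun a _ b _ h => Fin.val_injective h)]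

lemma aux_swap {β : Type*} [CommMonoid β] {m : ℕ} (f : ℕ → ℕ → β) :
    ∏ i : Fin m, ∏ j ∈ Finset.Ioi i, f i.1 j.1 = ∏ j ∈ Finset.range m, ∏ i ∈ Finset.range j, f i j := by
  rw [Finset.prod_comm' (t' := Finset.univ) (s' := fun j => Finset.Iio j)
    (by intro x y; simp [Finset.mem_Ioi, Finset.mem_Iio])]
  rw [← Fin.prod_univ_eq_prod_range (fun jn => ∏ i ∈ Finset.range jn, f i jn)]
  exact Finset.prod_congr rfl fun j _ => aux_Iio_prod j (fun i => f i j.1)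


lemma aux_det_inv_factorial (m : ℕ) (a : Fin m → ℕ) :
    Matrix.det (Matrix.of fun t j : Fin m => if t.1 ≤ a j then (((a j - t.1).factorial : ℚ))⁻¹ else 0)
    = (∏ i : Fin m, ∏ j ∈ Finset.Ioi i, ((a j : ℚ) - (a i : ℚ))) / ∏ j : Fin m, ((a j).factorial : ℚ) := by
  have hfne : (∏ j : Fin m, ((a j).factorial : ℚ)) ≠ 0 :=
    Finset.prod_ne_zero_iff.2 fun j _ => Nat.cast_ne_zero.2 (a j).factorial_ne_zero
  rw [eq_div_iff hfne, mul_comm]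
  calc (∏ j : Fin m, ((a j).factorial : ℚ)) *
      Matrix.det (Matrix.of fun t j : Fin m => if t.1 ≤ a j then (((a j - t.1).factorial : ℚ))⁻¹ else 0)
      = Matrix.det (Matrix.of fun t j : Fin m => (((a j).descFactorial t.1 : ℕ) : ℚ)) := by
        rw [← Matrix.det_mul_row (fun j => ((a j).factorial : ℚ))]
        congr 1
        ext t j
        simp only [Matrix.of_apply]
        by_cases h : t.1 ≤ a j
        · rw [if_pos h]
          have hcast : (((a j - t.1).factorial : ℕ) : ℚ) * (((a j).descFactorial t.1 : ℕ) : ℚ)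
              = ((a j).factorial : ℚ) := by
            exact_mod_cast congrArg (Nat.cast : ℕ → ℚ) (Nat.factorial_mul_descFactorial h)
          field_simp
          linarith [hcast]
        · rw [if_neg h, Nat.descFactorial_eq_zero_iff_lt.2 (lt_of_not_ge h)]
          simp
    _ = Matrix.det (Matrix.of fun i j : Fin m => (Polynomial.eval ((a j : ℚ)) (descPochhammer ℚ i.1))) := by
        congr 1; ext i j
        simp [descPochhammer_eval_eq_descFactorial]
    _ = ∏ i : Fin m, ∏ j ∈ Finset.Ioi i, ((a j : ℚ) - (a i : ℚ)) := by
        rw [← Matrix.det_transpose]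
        have h2 := Matrix.det_eval_matrixOfPolynomials_eq_det_vandermonde (fun j : Fin m => (a j : ℚ))
          (fun i => descPochhammer ℚ i.1) (fun i => descPochhammer_natDegree ℚ i.1)
          (fun i => monic_descPochhammer ℚ i.1)
        rw [← Matrix.det_vandermonde (fun j : Fin m => (a j : ℚ)), h2]
        congr 1


lemma aux_vand (n : ℕ) :
    (∏ j : Fin n, ∏ i ∈ Finset.univ.filter (· < j), ((X j : MvPolynomial (Fin n) ℤ) - X i))
    = ∑ σ : Equiv.Perm (Fin n), (Equiv.Perm.sign σ : ℤ) •
        ∏ j : Fin n, (X j : MvPolynomial (Fin n) ℤ) ^ (σ j : ℕ) := by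
  have h1 : (∏ j : Fin n, ∏ i ∈ Finset.univ.filter (· < j), ((X j : MvPolynomial (Fin n) ℤ) - X i))
      = ∏ i : Fin n, ∏ j ∈ Finset.Ioi i, ((X j : MvPolynomial (Fin n) ℤ) - X i) := by
    rw [Finset.prod_comm' (t' := Finset.univ) (s' := fun i => Finset.Ioi i)
      (by intro x y; simp [Finset.mem_Ioi, Finset.mem_filter, and_comm])]
  rw [h1, ← Matrix.det_vandermonde, Matrix.det_apply]
  refine Fintype.sum_equiv (Equiv.inv (Equiv.Perm (Fin n))) _ _ fun σ => ?_
  simp only [Equiv.inv_apply, Equiv.Perm.sign_inv, Matrix.vandermonde_apply, Units.smul_def]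
  congr 1
  rw [← Equiv.prod_comp σ (fun j => (X j : MvPolynomial (Fin n) ℤ) ^ ((σ⁻¹ j : Fin n) : ℕ))]
  simp


lemma aux_mono (n : ℕ) (d : Fin n → ℕ) :
    (∏ j : Fin n, (X j : MvPolynomial (Fin n) ℤ) ^ d j)
      = monomial (Finsupp.equivFunOnFinite.symm d) 1 := by
  rw [← prod_X_pow_eq_monomial]
  refine (Finset.prod_subset (Finset.subset_univ _) ?_).symm
  intro x _ hx
  have h0 : (Finsupp.equivFunOnFinite.symm d) x = 0 := by
    simpa [Finsupp.mem_support_iff] using hx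
  have h0' : d x = 0 := h0
  simp [h0']

lemma aux_coeff (n k N : ℕ) (e : Fin n → ℕ) :
    MvPolynomial.coeff (Finsupp.equivFunOnFinite.symm e)
      (((∑ j : Fin n, (X j : MvPolynomial (Fin n) ℤ) ^ k) ^ N) *
        ∏ j : Fin n, ∏ i ∈ Finset.univ.filter (· < j), (X j - X i))
    = ∑ σ : Equiv.Perm (Fin n), ∑ m ∈ Finset.piAntidiag Finset.univ N,
        (if (∀ j : Fin n, k * m j + (σ j : ℕ) = e j) then
          (Equiv.Perm.sign σ : ℤ) * (Nat.multinomial Finset.univ m : ℤ) else 0) := by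
  rw [aux_vand, Finset.sum_pow_eq_sum_piAntidiag, Finset.sum_mul_sum,
    MvPolynomial.coeff_sum]
  simp_rw [MvPolynomial.coeff_sum]
  rw [Finset.sum_comm]
  refine Finset.sum_congr rfl fun σ _ => Finset.sum_congr rfl fun m _ => ?_
  have hterm : (((Nat.multinomial Finset.univ m : ℕ) : MvPolynomial (Fin n) ℤ) *
        ∏ i : Fin n, ((X i : MvPolynomial (Fin n) ℤ) ^ k) ^ m i) *
      ((Equiv.Perm.sign σ : ℤ) • ∏ j : Fin n, (X j : MvPolynomial (Fin n) ℤ) ^ (σ j : ℕ))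
      = ((Equiv.Perm.sign σ : ℤ) * (Nat.multinomial Finset.univ m : ℤ)) •
        monomial (Finsupp.equivFunOnFinite.symm (fun j => k * m j + (σ j : ℕ))) (1 : ℤ) := by
    rw [← aux_mono, smul_eq_C_mul, smul_eq_C_mul]
    simp only [pow_add, pow_mul, Finset.prod_mul_distrib, map_mul]
    rw [show ((Nat.multinomial Finset.univ m : ℕ) : MvPolynomial (Fin n) ℤ)
        = C ((Nat.multinomial Finset.univ m : ℤ)) by simp]
    ring
  rw [hterm, MvPolynomial.coeff_smul, MvPolynomial.coeff_monomial]
  have hiff : (Finsupp.equivFunOnFinite.symm (fun j => k * m j + (σ j : ℕ)) = Finsupp.equivFunOnFinite.symm e)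
      ↔ (∀ j : Fin n, k * m j + (σ j : ℕ) = e j) := by
    rw [EmbeddingLike.apply_eq_iff_eq, _root_.funext_iff]
  by_cases hc : ∀ j : Fin n, k * m j + (σ j : ℕ) = e j
  · rw [if_pos (hiff.2 hc), if_pos hc, smul_eq_mul, mul_one]
  · rw [if_neg (fun h => hc (hiff.1 h)), if_neg hc, smul_zero]

theorem part1 (n k : ℕ) (hn : 1 ≤ n) (hk1 : 1 ≤ k) (hkn : k ≤ n)
    (q : ℕ → ℕ) (N : ℕ) (hN : N = ∑ i ∈ Finset.Icc 1 n, q i) :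
    ((MvPolynomial.coeff
        (Finsupp.equivFunOnFinite.symm fun j : Fin n => k * q (j.1 + 1) + j.1)
        (((∑ j : Fin n, (X j : MvPolynomial (Fin n) ℤ) ^ k) ^ N) *
          ∏ j : Fin n, ∏ i ∈ Finset.univ.filter (· < j), (X j - X i)) : ℤ) : ℚ) =
      (N.factorial : ℚ) *
        (Matrix.of (fun t j : Fin n =>
          if t.1 ≤ k * q (j.1 + 1) + j.1 ∧ t.1 % k = j.1 % k then
            ((((k * q (j.1 + 1) + j.1) - t.1)/k).factorial : ℚ)⁻¹ else 0) : Matrix (Fin n) (Fin n) ℚ).det := by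
  classical
  set e : Fin n → ℕ := fun j : Fin n => k * q (j.1 + 1) + j.1 with he
  set M : Matrix (Fin n) (Fin n) ℚ := Matrix.of (fun t j : Fin n =>
    if t.1 ≤ e j ∧ t.1 % k = j.1 % k then (((e j - t.1)/k).factorial : ℚ)⁻¹ else 0) with hMdef
  rw [aux_coeff n k N e, Matrix.det_apply']
  push_cast
  rw [Finset.mul_sum]
  refine Finset.sum_congr rfl fun σ _ => ?_
  -- inner sum per σ
  have hemod : ∀ j : Fin n, e j % k = j.1 % k := fun j => Nat.mul_add_mod k _ _
  have hinner : ∑ m ∈ Finset.piAntidiag Finset.univ N,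
      (if (∀ j : Fin n, k * m j + (σ j : ℕ) = e j) then
        ((Nat.multinomial Finset.univ m : ℕ) : ℚ) else 0)
      = (N.factorial : ℚ) * ∏ j : Fin n, M (σ j) j := by
    by_cases hc : ∀ j : Fin n, (σ j : ℕ) ≤ e j ∧ (σ j : ℕ) % k = j.1 % k
    · set m₀ : Fin n → ℕ := fun j => (e j - (σ j : ℕ))/k with hm₀
      have hdvd : ∀ j : Fin n, k ∣ e j - (σ j : ℕ) := fun j =>
        (Nat.modEq_iff_dvd' (hc j).1).1 ((hemod j).trans (hc j).2.symm).symm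
      have hmj : ∀ j : Fin n, k * m₀ j + (σ j : ℕ) = e j := fun j => by
        have h1 := Nat.mul_div_cancel' (hdvd j)
        have h2 : (σ j : ℕ) ≤ e j := (hc j).1
        simp only [hm₀]
        omega
      have hσsum : ∑ j : Fin n, (σ j : ℕ) = ∑ j : Fin n, j.1 :=
        Equiv.sum_comp σ (fun j : Fin n => j.1)
      have hqsum : ∑ j : Fin n, q (j.1 + 1) = N := by
        rw [Fin.sum_univ_eq_sum_range (fun j => q (j + 1)), hN,
          ← Finset.Ico_add_one_right_eq_Icc, Finset.sum_Ico_eq_sum_range]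
        simp [add_comm]
      have hesum : ∑ j : Fin n, e j = k * N + ∑ j : Fin n, j.1 := by
        simp only [he]
        rw [Finset.sum_add_distrib, ← Finset.mul_sum, hqsum]
      have hsum₀ : ∑ j : Fin n, m₀ j = N := by
        have h1 : ∑ j : Fin n, (k * m₀ j + (σ j : ℕ)) = ∑ j : Fin n, e j :=
          Finset.sum_congr rfl fun j _ => hmj j
        rw [Finset.sum_add_distrib, ← Finset.mul_sum, hσsum, hesum] at h1
        have := Nat.add_right_cancel h1
        exact Nat.eq_of_mul_eq_mul_left hk1 this
      have hmem : m₀ ∈ Finset.piAntidiag Finset.univ N := by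
        rw [Finset.mem_piAntidiag]
        exact ⟨hsum₀, fun i _ => Finset.mem_univ i⟩
      rw [Finset.sum_eq_single_of_mem m₀ hmem ?_]
      · rw [if_pos hmj]
        have hMval : ∀ j : Fin n, M (σ j) j = ((m₀ j).factorial : ℚ)⁻¹ := fun j => by
          simp only [hMdef, Matrix.of_apply, if_pos (hc j), hm₀]
        have hprod : ∏ j : Fin n, M (σ j) j = (∏ j : Fin n, ((m₀ j).factorial : ℚ))⁻¹ := by
          rw [← Finset.prod_inv_distrib]
          exact Finset.prod_congr rfl fun j _ => hMval j
        have hspec := Nat.multinomial_spec Finset.univ m₀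
        rw [hsum₀] at hspec
        have hne : (∏ j : Fin n, ((m₀ j).factorial : ℚ)) ≠ 0 :=
          Finset.prod_ne_zero_iff.2 fun j _ => Nat.cast_ne_zero.2 (m₀ j).factorial_ne_zero
        rw [hprod]
        have hcast : (∏ j : Fin n, ((m₀ j).factorial : ℚ)) * ((Nat.multinomial Finset.univ m₀ : ℕ) : ℚ)
            = (N.factorial : ℚ) := by exact_mod_cast congrArg (Nat.cast : ℕ → ℚ) hspec
        field_simp
        linarith [hcast]
      · intro m hm hne
        rw [if_neg]
        intro hall
        apply hne
        funext j
        have h1 := hall j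
        have h2 := hmj j
        have h3 : k * m j = k * m₀ j := by omega
        exact Nat.eq_of_mul_eq_mul_left hk1 h3
    · push_neg at hc
      obtain ⟨j₀, hj₀⟩ := hc
      have hz : M (σ j₀) j₀ = 0 := by
        simp only [hMdef, Matrix.of_apply]
        rw [if_neg]
        intro hcc
        exact hj₀ hcc.1 hcc.2
      have hp : ∏ j : Fin n, M (σ j) j = 0 := Finset.prod_eq_zero (Finset.mem_univ j₀) hz
      rw [hp, mul_zero]
      refine Finset.sum_eq_zero fun m _ => ?_
      rw [if_neg]
      intro hall
      have h1 := hall j₀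
      have hle : (σ j₀ : ℕ) ≤ e j₀ := by omega
      have hmod : (σ j₀ : ℕ) % k = j₀.1 % k := by
        have : (σ j₀ : ℕ) % k = e j₀ % k := by
          rw [← h1, Nat.add_comm, Nat.add_mul_mod_self_left]
        rw [this, hemod j₀]
      exact hj₀ hle hmod
  calc ∑ m ∈ Finset.piAntidiag Finset.univ N,
        (if (∀ j : Fin n, k * m j + (σ j : ℕ) = e j) then
          ((Equiv.Perm.sign σ : ℤ) : ℚ) * ((Nat.multinomial Finset.univ m : ℕ) : ℚ) else 0)
      = ((Equiv.Perm.sign σ : ℤ) : ℚ) * ∑ m ∈ Finset.piAntidiag Finset.univ N,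
        (if (∀ j : Fin n, k * m j + (σ j : ℕ) = e j) then
          ((Nat.multinomial Finset.univ m : ℕ) : ℚ) else 0) := by
        rw [Finset.mul_sum]
        exact Finset.sum_congr rfl fun m _ => by rw [mul_ite, mul_zero]
    _ = _ := by rw [hinner]; ring

theorem part2 (n k : ℕ) (hn : 1 ≤ n) (hk1 : 1 ≤ k) (hkn : k ≤ n) (q : ℕ → ℕ) :
    (Matrix.of (fun t j : Fin n =>
      if t.1 ≤ k * q (j.1 + 1) + j.1 ∧ t.1 % k = j.1 % k then
        ((((k * q (j.1 + 1) + j.1) - t.1)/k).factorial : ℚ)⁻¹ else 0) : Matrix (Fin n) (Fin n) ℚ).det =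
    ∏ s ∈ Finset.Icc 1 k,
      ((∏ j ∈ Finset.range ((n - s) / k + 1), ∏ i ∈ Finset.range j,
          (((q (j * k + s) + j : ℕ) : ℚ) - ((q (i * k + s) + i : ℕ) : ℚ))) /
        ∏ j ∈ Finset.range ((n - s) / k + 1), ((q (j * k + s) + j).factorial : ℚ)) := by
  classical
  set M : Matrix (Fin n) (Fin n) ℚ := Matrix.of (fun t j : Fin n =>
    if t.1 ≤ k * q (j.1 + 1) + j.1 ∧ t.1 % k = j.1 % k then
      ((((k * q (j.1 + 1) + j.1) - t.1)/k).factorial : ℚ)⁻¹ else 0) with hMdef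
  set b : Fin n → Fin k := fun t => ⟨t.1 % k, Nat.mod_lt _ hk1⟩ with hb
  have htri : M.BlockTriangular b := by
    intro i j hij
    simp only [hMdef, Matrix.of_apply]
    rw [if_neg]
    rintro ⟨h1, h2⟩
    have : b i = b j := Fin.ext h2
    rw [this] at hij
    exact lt_irrefl _ hij
  rw [htri.det_fintype]
  have hIcc : ∀ (F : ℕ → ℚ), ∏ s ∈ Finset.Icc 1 k, F s = ∏ s : Fin k, F (s.1+1) := by
    intro F
    rw [← Finset.Ico_add_one_right_eq_Icc, Finset.prod_Ico_eq_prod_range,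
      ← Fin.prod_univ_eq_prod_range (fun i => F (1+i))]
    exact Finset.prod_congr rfl fun s _ => by rw [Nat.add_comm]
  rw [hIcc]
  refine Finset.prod_congr rfl fun s _ => ?_
  set m₁ := (n - (s.1+1))/k + 1 with hm₁
  set a : Fin m₁ → ℕ := fun j' => q (j'.1 * k + (s.1+1)) + j'.1 with ha
  have hEmem : ∀ j' : Fin m₁, j'.1 * k + s.1 < n := by
    intro j'
    have h1 : j'.1 ≤ (n - (s.1+1))/k := Nat.lt_succ_iff.1 j'.2
    have h2 : j'.1 * k ≤ n - (s.1+1) := (Nat.le_div_iff_mul_le hk1).1 h1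
    have h3 := s.2
    omega
  let E : Fin m₁ ≃ {t : Fin n // b t = s} :=
    { toFun := fun j' => ⟨⟨j'.1 * k + s.1, hEmem j'⟩, by
        simp only [hb]
        exact Fin.ext (by simp [Nat.mul_comm j'.1 k, Nat.mul_add_mod, Nat.mod_eq_of_lt s.2])⟩
      invFun := fun t => ⟨t.1.1 / k, by
        have hmod : t.1.1 % k = s.1 := congrArg Fin.val t.2
        have hdm := Nat.div_add_mod t.1.1 k
        have htn : t.1.1 < n := t.1.2
        have hcomm : (t.1.1 / k) * k = k * (t.1.1 / k) := Nat.mul_comm _ _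
        have h4 : (t.1.1 / k) * k ≤ n - (s.1+1) := by omega
        exact Nat.lt_succ_of_le ((Nat.le_div_iff_mul_le hk1).2 h4)⟩
      left_inv := fun j' => by
        apply Fin.ext
        show (j'.1 * k + s.1) / k = j'.1
        rw [Nat.mul_comm, Nat.mul_add_div hk1, Nat.div_eq_of_lt s.2]
        omega
      right_inv := fun t => by
        apply Subtype.ext
        apply Fin.ext
        show (t.1.1 / k) * k + s.1 = t.1.1
        have hmod : t.1.1 % k = s.1 := congrArg Fin.val t.2
        have hdm := Nat.div_add_mod t.1.1 k
        have hcomm : (t.1.1 / k) * k = k * (t.1.1 / k) := Nat.mul_comm _ _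
        omega }
  rw [← Matrix.det_submatrix_equiv_self E (M.toSquareBlock b s)]
  have hblock : (M.toSquareBlock b s).submatrix (E : Fin m₁ → _) (E : Fin m₁ → _)
      = Matrix.of (fun t' j' : Fin m₁ =>
        if t'.1 ≤ a j' then ((a j' - t'.1).factorial : ℚ)⁻¹ else 0) := by
    ext t' j'
    simp only [Matrix.submatrix_apply, Matrix.toSquareBlock_def, hMdef, Matrix.of_apply, E,
      Equiv.coe_fn_mk]
    have hidx : (j'.1 * k + s.1) + 1 = j'.1 * k + (s.1+1) := by omega
    have hmod : (t'.1 * k + s.1) % k = (j'.1 * k + s.1) % k := by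
      simp [Nat.mul_comm _ k, Nat.mul_add_mod]
    have hle : (t'.1 * k + s.1 ≤ k * q ((j'.1 * k + s.1) + 1) + (j'.1 * k + s.1)) ↔ t'.1 ≤ a j' := by
      rw [hidx]
      have h5 : k * q (j'.1 * k + (s.1+1)) + (j'.1 * k + s.1) = (a j') * k + s.1 := by
        simp only [ha]; ring
      rw [h5]
      constructor
      · intro h
        have h6 : t'.1 * k ≤ (a j') * k := by omega
        exact Nat.le_of_mul_le_mul_right h6 hk1
      · intro h
        have h6 : t'.1 * k ≤ (a j') * k := Nat.mul_le_mul_right k h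
        omega
    by_cases hc : t'.1 ≤ a j'
    · rw [if_pos (by exact ⟨hle.2 hc, hmod⟩), if_pos hc]
      obtain ⟨d, hd⟩ : ∃ d, a j' = t'.1 + d := ⟨a j' - t'.1, by omega⟩
      have h7 : k * q ((j'.1 * k + s.1) + 1) + (j'.1 * k + s.1) = t'.1 * k + d * k + s.1 := by
        rw [hidx]
        calc k * q (j'.1 * k + (s.1+1)) + (j'.1 * k + s.1) = (a j') * k + s.1 := by
              simp only [ha]; ring
          _ = (t'.1 + d) * k + s.1 := by rw [← hd]
          _ = t'.1 * k + d * k + s.1 := by ring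
      have harg : (k * q ((j'.1 * k + s.1) + 1) + (j'.1 * k + s.1) - (t'.1 * k + s.1))/k
          = a j' - t'.1 := by
        rw [h7]
        have h8 : t'.1 * k + d * k + s.1 - (t'.1 * k + s.1) = d * k := by omega
        rw [h8, Nat.mul_div_cancel _ hk1]
        omega
      rw [harg]
    · rw [if_neg (fun hcc => hc (hle.1 hcc.1)), if_neg hc]
  rw [hblock, aux_det_inv_factorial m₁ a]
  congr 1
  · exact aux_swap (fun i j => ((q (j * k + (s.1+1)) + j : ℕ) : ℚ) - ((q (i * k + (s.1+1)) + i : ℕ) : ℚ))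
  · exact Fin.prod_univ_eq_prod_range (fun j => ((q (j * k + (s.1+1)) + j).factorial : ℚ)) m₁

theorem stmt_1 (n k : ℕ) (hn : 1 ≤ n) (hk1 : 1 ≤ k) (hkn : k ≤ n)
    (q : ℕ → ℕ) (N : ℕ) (hN : N = ∑ i ∈ Finset.Icc 1 n, q i) :
    ((MvPolynomial.coeff
        (Finsupp.equivFunOnFinite.symm fun j : Fin n => k * q (j.1 + 1) + j.1)
        (((∑ j : Fin n, (X j : MvPolynomial (Fin n) ℤ) ^ k) ^ N) *
          ∏ j : Fin n, ∏ i ∈ Finset.univ.filter (· < j), (X j - X i)) : ℤ) : ℚ) =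
      (N.factorial : ℚ) *
        ∏ s ∈ Finset.Icc 1 k,
          ((∏ j ∈ Finset.range ((n - s) / k + 1), ∏ i ∈ Finset.range j,
              (((q (j * k + s) + j : ℕ) : ℚ) - ((q (i * k + s) + i : ℕ) : ℚ))) /
            ∏ j ∈ Finset.range ((n - s) / k + 1),
              ((q (j * k + s) + j).factorial : ℚ)) := by
  rw [part1 n k hn hk1 hkn q N hN, part2 n k hn hk1 hkn q]
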